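/- Let f : [0,∞) → ℂ be in L² with ∫₀^∞ (1+τ⁴)·|g(τ)|² dτ ≤ r₁² where h(τ) = g(τ)/√(1+τ⁴). If additionally ‖Â h‖_{L²} ≤ δ where (Â h)(τ) = (sinh(μ₀(1-x₀)√τ)/sinh(μ₀√τ))·h(τ), and if for all τ ≥ τ̄ we have |sinh(μ₀√τ)/sinh(μ₀(1-x₀)√τ)|·δ ≤ r₁/√(1+τ̄⁴) — then ‖h‖_{L²} ≤ √2·max(δ·sup_{τ≤τ̄}|sinh(μ₀√τ)/sinh(μ₀(1-x₀)√τ)|, r₁/√(1+τ̄⁴)). -/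

import Mathlib

open Complex Real Set MeasureTheory

lemma aux_mu (μ₀ : ℂ) (hμ₀ : μ₀ = (1 + Complex.I) / Real.sqrt 2) (c : ℝ) :
    μ₀ * (c:ℂ) = ((c / Real.sqrt 2 : ℝ):ℂ) + ((c / Real.sqrt 2 : ℝ):ℂ) * Complex.I := by
  have h2 : (Real.sqrt 2 : ℂ) ≠ 0 := by
    exact_mod_cast (Real.sqrt_pos.mpr (by norm_num : (0:ℝ) < 2)).ne'
  rw [hμ₀]
  push_cast
  field_simp

lemma aux_sinh_le_mul_cosh {t : ℝ} (ht : 0 ≤ t) : Real.sinh t ≤ t * Real.cosh t := by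
  have hmono : Monotone (fun b : ℝ => b * Real.cosh b - Real.sinh b) := by
    apply monotone_of_deriv_nonneg
    · fun_prop
    · intro x
      have hd : HasDerivAt (fun b : ℝ => b * Real.cosh b - Real.sinh b) (x * Real.sinh x) x := by
        have := ((hasDerivAt_id x).mul (Real.hasDerivAt_cosh x)).sub (Real.hasDerivAt_sinh x)
        exact this.congr_deriv (by simp)
      rw [hd.deriv]
      rcases le_or_gt 0 x with hx | hx
      · exact mul_nonneg hx (Real.sinh_nonneg_iff.mpr hx)
      · nlinarith [Real.sinh_neg_iff.mpr hx]
  have := hmono ht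
  simpa using this

lemma aux_sinh_decomp (x y : ℝ) :
    Complex.sinh ((x:ℂ) + (y:ℂ)*Complex.I) =
      ((Real.sinh x * Real.cos y : ℝ):ℂ) + ((Real.cosh x * Real.sin y : ℝ):ℂ) * Complex.I := by
  rw [Complex.sinh_add, Complex.sinh_mul_I, Complex.cosh_mul_I]
  push_cast [Complex.ofReal_sinh, Complex.ofReal_cosh, Complex.ofReal_sin, Complex.ofReal_cos]
  ring

lemma aux_abs_sq (x y : ℝ) :
    (‖Complex.sinh ((x:ℂ) + (y:ℂ)*Complex.I)‖)^2 =
      Real.sinh x^2 * Real.cos y^2 + Real.cosh x^2 * Real.sin y^2 := by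
  rw [aux_sinh_decomp, Complex.norm_add_mul_I, Real.sq_sqrt (by positivity)]
  ring

lemma aux_lower {t : ℝ} (ht : 0 ≤ t) :
    Real.sinh t ≤ ‖Complex.sinh ((t:ℂ) + (t:ℂ)*Complex.I)‖ := by
  have h2 : Real.sinh t ^ 2 ≤ (‖Complex.sinh ((t:ℂ) + (t:ℂ)*Complex.I)‖)^2 := by
    rw [aux_abs_sq]
    have h1 : Real.sinh t ^2 * Real.sin t ^2 ≤ Real.cosh t^2 * Real.sin t^2 := by
      apply mul_le_mul_of_nonneg_right _ (sq_nonneg _)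
      nlinarith [Real.cosh_sq t, Real.sinh_nonneg_iff.mpr ht, Real.cosh_pos t]
    nlinarith [Real.sin_sq_add_cos_sq t]
  exact (pow_le_pow_iff_left₀ (Real.sinh_nonneg_iff.mpr ht) (norm_nonneg _) two_ne_zero).mp h2

lemma aux_upper {t : ℝ} (ht : 0 ≤ t) :
    ‖Complex.sinh ((t:ℂ) + (t:ℂ)*Complex.I)‖ ≤ Real.sqrt 2 * (t * Real.cosh t) := by
  have h2 : (‖Complex.sinh ((t:ℂ) + (t:ℂ)*Complex.I)‖)^2 ≤ (Real.sqrt 2 * (t * Real.cosh t))^2 := by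
    rw [aux_abs_sq]
    have hs : Real.sinh t ≤ t * Real.cosh t := aux_sinh_le_mul_cosh ht
    have hsin : Real.sin t ^2 ≤ t^2 := Real.sin_sq_le_sq
    have hrw : (Real.sqrt 2 * (t * Real.cosh t))^2 = 2 * (t * Real.cosh t)^2 := by
      rw [mul_pow, Real.sq_sqrt (by norm_num)]
    rw [hrw]
    nlinarith [Real.sinh_nonneg_iff.mpr ht, Real.cosh_pos t, Real.cos_sq_le_one t, sq_nonneg (Real.cosh t), sq_nonneg t, Real.sin_sq_add_cos_sq t, mul_pos (Real.cosh_pos t) (Real.cosh_pos t)]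
  have hrhs : 0 ≤ Real.sqrt 2 * (t * Real.cosh t) := by positivity
  exact (pow_le_pow_iff_left₀ (norm_nonneg _) hrhs two_ne_zero).mp h2

theorem stmt_9 (μ₀ : ℂ) (hμ₀ : μ₀ = (1 + Complex.I) / Real.sqrt 2)
    (x₀ : ℝ) (hx₀ : x₀ ∈ Set.Ioo (0:ℝ) 1)
    (r₁ δ τbar : ℝ) (hr₁ : 0 < r₁) (hδ : 0 < δ) (hτbar : 0 < τbar)
    (g h : ℝ → ℂ) (hgh : ∀ τ, h τ = g τ / Real.sqrt (1 + τ^4))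
    (m : ℝ → ℂ)
    (hm : ∀ τ, m τ = Complex.sinh (μ₀ * (1 - x₀) * Real.sqrt τ) / Complex.sinh (μ₀ * Real.sqrt τ))
    (hint₁ : IntegrableOn (fun τ => (1 + τ^4) * (‖g τ‖)^2) (Set.Ioi 0))
    (hint₂ : IntegrableOn (fun τ => (‖m τ * h τ‖)^2) (Set.Ioi 0))
    (hint₃ : IntegrableOn (fun τ => (‖h τ‖)^2) (Set.Ioi 0))
    (hsource : ∫ τ in Set.Ioi (0:ℝ), (1 + τ^4) * (‖g τ‖)^2 ≤ r₁^2)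
    (hdata : ∫ τ in Set.Ioi (0:ℝ), (‖m τ * h τ‖)^2 ≤ δ^2)
    (hhigh : ∀ τ ≥ τbar,
      ‖Complex.sinh (μ₀ * Real.sqrt τ)‖ /
        ‖Complex.sinh (μ₀ * (1 - x₀) * Real.sqrt τ)‖ * δ ≤
      r₁ / Real.sqrt (1 + τbar^4)) :
    Real.sqrt (∫ τ in Set.Ioi (0:ℝ), (‖h τ‖)^2) ≤
      Real.sqrt 2 * max
        (δ * sSup ((fun τ => ‖Complex.sinh (μ₀ * Real.sqrt τ)‖ /
          ‖Complex.sinh (μ₀ * (1 - x₀) * Real.sqrt τ)‖) '' Set.Icc 0 τbar))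
        (r₁ / Real.sqrt (1 + τbar^4)) := by
  obtain ⟨hx₀0, hx₀1⟩ := hx₀
  have hx1 : 0 < 1 - x₀ := by linarith
  set F : ℝ → ℝ := (fun τ => ‖Complex.sinh (μ₀ * Real.sqrt τ)‖ /
          ‖Complex.sinh (μ₀ * (1 - x₀) * Real.sqrt τ)‖) with hF
  set S : ℝ := sSup (F '' Set.Icc 0 τbar) with hSdef
  have hXpos : (0:ℝ) < 1 + τbar^4 := by positivity
  set X : ℝ := Real.sqrt (1 + τbar^4) with hXdef
  have hX0 : 0 < X := Real.sqrt_pos.mpr hXpos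
  set M : ℝ := max (δ * S) (r₁ / X) with hMdef
  -- rewriting of the arguments of sinh
  have heq1 : ∀ τ : ℝ, μ₀ * (Real.sqrt τ : ℂ) =
      ((Real.sqrt τ / Real.sqrt 2 : ℝ):ℂ) + ((Real.sqrt τ / Real.sqrt 2 : ℝ):ℂ) * Complex.I :=
    fun τ => aux_mu μ₀ hμ₀ _
  have heq2 : ∀ τ : ℝ, μ₀ * (1 - (x₀:ℂ)) * (Real.sqrt τ : ℂ) =
      (((1 - x₀) * Real.sqrt τ / Real.sqrt 2 : ℝ):ℂ) +
      (((1 - x₀) * Real.sqrt τ / Real.sqrt 2 : ℝ):ℂ) * Complex.I := by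
    intro τ
    have : μ₀ * (1 - (x₀:ℂ)) * (Real.sqrt τ : ℂ) = μ₀ * (((1 - x₀) * Real.sqrt τ : ℝ):ℂ) := by
      push_cast; ring
    rw [this, aux_mu μ₀ hμ₀]
  have hF0 : F 0 = 0 := by
    simp [hF, Real.sqrt_zero]
  -- upper bound for F on Icc 0 τbar
  set C : ℝ := Real.sqrt 2 * Real.cosh (Real.sqrt τbar / Real.sqrt 2) / (1 - x₀) with hCdef
  have hC0 : 0 ≤ C := by positivity
  have hFbound : ∀ τ ∈ Set.Icc (0:ℝ) τbar, F τ ≤ C := by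
    rintro τ ⟨hτ0, hττ⟩
    rcases eq_or_lt_of_le hτ0 with rfl | hτpos
    · rw [hF0]; exact hC0
    · set b : ℝ := Real.sqrt τ / Real.sqrt 2 with hbdef
      set c : ℝ := (1 - x₀) * Real.sqrt τ / Real.sqrt 2 with hcdef
      have hsτ : 0 < Real.sqrt τ := Real.sqrt_pos.mpr hτpos
      have hb : 0 < b := by positivity
      have hc : 0 < c := by positivity
      have hNu : ‖Complex.sinh (μ₀ * Real.sqrt τ)‖ ≤
          Real.sqrt 2 * (b * Real.cosh b) := by
        rw [heq1 τ]; exact aux_upper hb.le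
      have hDl : c ≤ ‖Complex.sinh (μ₀ * (1 - (x₀:ℂ)) * Real.sqrt τ)‖ := by
        rw [heq2 τ]
        exact le_trans (Real.self_lt_sinh_iff.mpr hc).le (aux_lower hc.le)
      have step1 : F τ ≤ Real.sqrt 2 * (b * Real.cosh b) / c :=
        div_le_div₀ (by positivity) hNu hc hDl
      have step2 : Real.sqrt 2 * (b * Real.cosh b) / c =
          Real.sqrt 2 * Real.cosh b / (1 - x₀) := by
        rw [hbdef, hcdef]
        have h2 : Real.sqrt 2 ≠ 0 := (Real.sqrt_pos.mpr (by norm_num)).ne'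
        field_simp
      have step3 : Real.sqrt 2 * Real.cosh b / (1 - x₀) ≤ C := by
        rw [hCdef]
        have hble : b ≤ Real.sqrt τbar / Real.sqrt 2 :=
          (div_le_div_iff_of_pos_right (by positivity)).mpr (Real.sqrt_le_sqrt hττ)
        have hcosh : Real.cosh b ≤ Real.cosh (Real.sqrt τbar / Real.sqrt 2) :=
          Real.cosh_le_cosh.mpr
            (by rw [_root_.abs_of_nonneg hb.le, _root_.abs_of_nonneg (by positivity : (0:ℝ) ≤ Real.sqrt τbar / Real.sqrt 2)]; exact hble)
        gcongr
      exact step1.trans (step2 ▸ step3)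
  have hBdd : BddAbove (F '' Set.Icc 0 τbar) := by
    refine ⟨C, ?_⟩
    rintro y ⟨τ, hτ, rfl⟩
    exact hFbound τ hτ
  have hS0 : 0 ≤ S := by
    have hmem : F 0 ∈ F '' Set.Icc 0 τbar := ⟨0, ⟨le_refl 0, hτbar.le⟩, rfl⟩
    have := le_csSup hBdd hmem
    rw [hF0] at this
    exact this
  have hM0 : 0 ≤ M := le_trans (by positivity : (0:ℝ) ≤ r₁ / X) (le_max_right _ _)
  -- pointwise bound on low frequencies
  have hlow_pt : ∀ τ ∈ Set.Ioc (0:ℝ) τbar,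
      (‖h τ‖)^2 ≤ S^2 * (‖m τ * h τ‖)^2 := by
    rintro τ ⟨hτ0, hττ⟩
    have hsτ : 0 < Real.sqrt τ := Real.sqrt_pos.mpr hτ0
    have hb : 0 < Real.sqrt τ / Real.sqrt 2 := by positivity
    have hc : 0 < (1 - x₀) * Real.sqrt τ / Real.sqrt 2 := by positivity
    have hN0 : 0 < ‖Complex.sinh (μ₀ * Real.sqrt τ)‖ := by
      rw [heq1 τ]
      exact lt_of_lt_of_le (Real.sinh_pos_iff.mpr hb) (aux_lower hb.le)
    have hD0 : 0 < ‖Complex.sinh (μ₀ * (1 - (x₀:ℂ)) * Real.sqrt τ)‖ := by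
      rw [heq2 τ]
      exact lt_of_lt_of_le (Real.sinh_pos_iff.mpr hc) (aux_lower hc.le)
    have key : ‖h τ‖ = F τ * ‖m τ * h τ‖ := by
      rw [norm_mul, hm τ, norm_div, hF]
      field_simp
      rw [mul_div_assoc, div_self (norm_ne_zero_iff.mpr ?_), mul_one]
      have := hD0.ne'
      rw [norm_ne_zero_iff] at this
      convert this using 2
      ring
    have hFS : F τ ≤ S := le_csSup hBdd ⟨τ, ⟨hτ0.le, hττ⟩, rfl⟩
    calc (‖h τ‖)^2 = (F τ * ‖m τ * h τ‖)^2 := by rw [key]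
      _ ≤ (S * ‖m τ * h τ‖)^2 := by
          apply pow_le_pow_left₀ (by positivity)
          exact mul_le_mul_of_nonneg_right hFS (norm_nonneg _)
      _ = S^2 * (‖m τ * h τ‖)^2 := by rw [mul_pow]
  -- pointwise bound on high frequencies
  have hhigh_pt : ∀ τ ∈ Set.Ioi τbar,
      (‖h τ‖)^2 ≤ (1/(1+τbar^4)) * ((1 + τ^4) * (‖g τ‖)^2) := by
    intro τ hτ
    have hττ : τbar < τ := hτ
    have hτ0 : 0 < τ := hτbar.trans hττ
    have h1 : (0:ℝ) < 1 + τ^4 := by positivity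
    have habs : ‖h τ‖ = ‖g τ‖ / Real.sqrt (1+τ^4) := by
      rw [hgh τ, norm_div, Complex.norm_real, Real.norm_of_nonneg (Real.sqrt_nonneg _)]
    rw [habs, div_pow, Real.sq_sqrt h1.le]
    rw [div_le_iff₀ h1, one_div, inv_mul_eq_div, div_mul_eq_mul_div, le_div_iff₀ hXpos]
    have h2 : 1 + τbar^4 ≤ 1 + τ^4 := by
      have := pow_le_pow_left₀ hτbar.le hττ.le 4
      linarith
    have hG : (0:ℝ) ≤ ‖g τ‖^2 := sq_nonneg _
    have h3 : (1:ℝ) + τ^4 ≤ (1+τ^4)*(1+τ^4) := by nlinarith [pow_nonneg hτ0.le 4]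
    nlinarith [mul_le_mul_of_nonneg_left h2 hG, mul_le_mul_of_nonneg_left h3 hG]
  -- splitting the integral
  have hsub1 : Set.Ioc (0:ℝ) τbar ⊆ Set.Ioi 0 := Set.Ioc_subset_Ioi_self
  have hsub2 : Set.Ioi τbar ⊆ Set.Ioi (0:ℝ) := Set.Ioi_subset_Ioi hτbar.le
  have hsplit : ∫ τ in Set.Ioi (0:ℝ), (‖h τ‖)^2 =
      (∫ τ in Set.Ioc (0:ℝ) τbar, (‖h τ‖)^2) +
        ∫ τ in Set.Ioi τbar, (‖h τ‖)^2 := by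
    rw [← Set.Ioc_union_Ioi_eq_Ioi hτbar.le]
    exact setIntegral_union (Set.Ioc_disjoint_Ioi le_rfl) measurableSet_Ioi
      (hint₃.mono_set hsub1) (hint₃.mono_set hsub2)
  have hlow : ∫ τ in Set.Ioc (0:ℝ) τbar, (‖h τ‖)^2 ≤ M^2 := by
    have e1 : ∫ τ in Set.Ioc (0:ℝ) τbar, (‖h τ‖)^2 ≤
        ∫ τ in Set.Ioc (0:ℝ) τbar, S^2 * (‖m τ * h τ‖)^2 :=
      setIntegral_mono_on (hint₃.mono_set hsub1) ((hint₂.mono_set hsub1).const_mul _)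
        measurableSet_Ioc hlow_pt
    have e2 : ∫ τ in Set.Ioc (0:ℝ) τbar, S^2 * (‖m τ * h τ‖)^2 =
        S^2 * ∫ τ in Set.Ioc (0:ℝ) τbar, (‖m τ * h τ‖)^2 :=
      integral_const_mul _ _
    have e3 : ∫ τ in Set.Ioc (0:ℝ) τbar, (‖m τ * h τ‖)^2 ≤
        ∫ τ in Set.Ioi (0:ℝ), (‖m τ * h τ‖)^2 :=
      setIntegral_mono_set hint₂ (Filter.Eventually.of_forall fun τ => by positivity)
        (HasSubset.Subset.eventuallyLE hsub1)
    have e4 : S^2 * ∫ τ in Set.Ioi (0:ℝ), (‖m τ * h τ‖)^2 ≤ S^2 * δ^2 :=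
      mul_le_mul_of_nonneg_left hdata (by positivity)
    have e5 : S^2 * δ^2 = (δ * S)^2 := by ring
    have e6 : (δ * S)^2 ≤ M^2 := pow_le_pow_left₀ (by positivity) (le_max_left _ _) 2
    calc ∫ τ in Set.Ioc (0:ℝ) τbar, (‖h τ‖)^2
        ≤ S^2 * ∫ τ in Set.Ioc (0:ℝ) τbar, (‖m τ * h τ‖)^2 := e2 ▸ e1
      _ ≤ S^2 * ∫ τ in Set.Ioi (0:ℝ), (‖m τ * h τ‖)^2 :=
          mul_le_mul_of_nonneg_left e3 (by positivity)
      _ ≤ S^2 * δ^2 := e4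
      _ = (δ * S)^2 := e5
      _ ≤ M^2 := e6
  have hhighI : ∫ τ in Set.Ioi τbar, (‖h τ‖)^2 ≤ M^2 := by
    have e1 : ∫ τ in Set.Ioi τbar, (‖h τ‖)^2 ≤
        ∫ τ in Set.Ioi τbar, (1/(1+τbar^4)) * ((1 + τ^4) * (‖g τ‖)^2) :=
      setIntegral_mono_on (hint₃.mono_set hsub2) ((hint₁.mono_set hsub2).const_mul _)
        measurableSet_Ioi hhigh_pt
    have e2 : ∫ τ in Set.Ioi τbar, (1/(1+τbar^4)) * ((1 + τ^4) * (‖g τ‖)^2) =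
        (1/(1+τbar^4)) * ∫ τ in Set.Ioi τbar, (1 + τ^4) * (‖g τ‖)^2 :=
      integral_const_mul _ _
    have e3 : ∫ τ in Set.Ioi τbar, (1 + τ^4) * (‖g τ‖)^2 ≤
        ∫ τ in Set.Ioi (0:ℝ), (1 + τ^4) * (‖g τ‖)^2 :=
      setIntegral_mono_set hint₁ (Filter.Eventually.of_forall fun τ => by positivity)
        (HasSubset.Subset.eventuallyLE hsub2)
    have e5 : (1/(1+τbar^4)) * r₁^2 = (r₁ / X)^2 := by
      rw [hXdef, div_pow, Real.sq_sqrt hXpos.le]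
      ring
    have e6 : (r₁ / X)^2 ≤ M^2 := pow_le_pow_left₀ (by positivity) (le_max_right _ _) 2
    calc ∫ τ in Set.Ioi τbar, (‖h τ‖)^2
        ≤ (1/(1+τbar^4)) * ∫ τ in Set.Ioi τbar, (1 + τ^4) * (‖g τ‖)^2 := e2 ▸ e1
      _ ≤ (1/(1+τbar^4)) * r₁^2 :=
          mul_le_mul_of_nonneg_left (e3.trans hsource) (by positivity)
      _ = (r₁ / X)^2 := e5
      _ ≤ M^2 := e6
  have htot : ∫ τ in Set.Ioi (0:ℝ), (‖h τ‖)^2 ≤ 2 * M^2 := by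
    rw [hsplit]; linarith
  calc Real.sqrt (∫ τ in Set.Ioi (0:ℝ), (‖h τ‖)^2)
      ≤ Real.sqrt (2 * M^2) := Real.sqrt_le_sqrt htot
    _ = Real.sqrt 2 * M := by
        rw [Real.sqrt_mul (by norm_num : (0:ℝ) ≤ 2), Real.sqrt_sq hM0]
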